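/- (Theorem 1, explicit form.) Suppose p_q = max_k p_k is attained at index q, let n ≥ 1 be an integer, let O be a Hermitian d×d matrix, and set ε = ‖ρ̄ − ρ‖₁. If (p_q + ε)ⁿ < 2 p_qⁿ, then tr(ρ̄ⁿ) > 0 and | tr(ρ̄ⁿ O)/tr(ρ̄ⁿ) − ⟨ψ_q, O ψ_q⟩ | ≤ 2 ‖O‖_∞ (Σ_{k≠q} p_kⁿ)/p_qⁿ + 4 ‖O‖_∞ ((p_q + ε)ⁿ − p_qⁿ) / (2 p_qⁿ − (p_q + ε)ⁿ). -/

import Mathlib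

open MeasureTheory Complex
open scoped BigOperators ComplexConjugate Real NormedSpace ComplexOrder

attribute [local instance] Matrix.frobeniusSeminormedAddCommGroup
  Matrix.frobeniusNormedAddCommGroup Matrix.frobeniusNormedSpace

noncomputable section

/-- The complex inner product on `ℂ^d`, conjugate-linear in the first argument. -/
def cinner {d : ℕ} (u v : Fin d → ℂ) : ℂ := ∑ i, conj (u i) * v i

/-- The rank-one matrix `|u⟩⟨v|`, acting as `w ↦ ⟨v, w⟩ u`. -/
def ketbra {d : ℕ} (u v : Fin d → ℂ) : Matrix (Fin d) (Fin d) ℂ :=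
  Matrix.of fun i j => u i * conj (v j)

/-- The density of the centered normal distribution `N(0, σ)`. -/
def gaussPDF (σ t : ℝ) : ℝ := (Real.sqrt (2 * π) * σ)⁻¹ * Real.exp (-(t ^ 2) / (2 * σ ^ 2))

/-- The time-evolved state `ψ(t) = exp(−i t H) ψ(0)`. -/
def evolve {d : ℕ} (H : Matrix (Fin d) (Fin d) ℂ) (ψ0 : Fin d → ℂ) (t : ℝ) : Fin d → ℂ :=
  (NormedSpace.exp ((-(Complex.I * (t : ℂ))) • H)).mulVec ψ0

/-- The time-evolved pure state `ρ(t) = |ψ(t)⟩⟨ψ(t)|`. -/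
def rhoT {d : ℕ} (H : Matrix (Fin d) (Fin d) ℂ) (ψ0 : Fin d → ℂ) (t : ℝ) :
    Matrix (Fin d) (Fin d) ℂ :=
  ketbra (evolve H ψ0 t) (evolve H ψ0 t)

/-- The Gaussian time-average `ρ̄ = ∫ G(t) ρ(t) dt` (a Bochner integral of the matrix-valued
function, with respect to the Frobenius norm topology on matrices). -/
def rhoBar {d : ℕ} (H : Matrix (Fin d) (Fin d) ℂ) (ψ0 : Fin d → ℂ) (σ : ℝ) :
    Matrix (Fin d) (Fin d) ℂ :=
  ∫ t : ℝ, gaussPDF σ t • rhoT H ψ0 t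

/-- The trace norm (sum of singular values) `‖A‖₁ = tr √(Aᴴ A)`. -/
def traceNorm {d : ℕ} (A : Matrix (Fin d) (Fin d) ℂ) : ℝ :=
  (((Matrix.posSemidef_conjTranspose_mul_self A).1.eigenvectorUnitary : Matrix (Fin d) (Fin d) ℂ) *
    Matrix.diagonal (fun i => ((√((Matrix.posSemidef_conjTranspose_mul_self A).1.eigenvalues i) : ℝ) : ℂ)) *
    (star (Matrix.posSemidef_conjTranspose_mul_self A).1.eigenvectorUnitary :
      Matrix (Fin d) (Fin d) ℂ)).trace.re

/-- The operator norm `‖A‖_∞` of a matrix acting on the Euclidean space `ℂ^d`. -/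
def opNorm {d : ℕ} (A : Matrix (Fin d) (Fin d) ℂ) : ℝ :=
  ‖Matrix.toEuclideanCLM (𝕜 := ℂ) A‖

def eu (v : Fin d → ℂ) : EuclideanSpace ℂ (Fin d) := (WithLp.equiv 2 _).symm v

lemma cinner_eq (u v : Fin d → ℂ) : cinner u v = @inner ℂ _ _ (eu u) (eu v) := by
  simp [cinner, eu, PiLp.inner_apply, RCLike.inner_apply, mul_comm]

lemma toEuclideanCLM_eu (A : Matrix (Fin d) (Fin d) ℂ) (v : Fin d → ℂ) :
    Matrix.toEuclideanCLM (𝕜 := ℂ) A (eu v) = eu (A.mulVec v) := by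
  simp [eu, Matrix.toLin'_apply]

lemma norm_mulVec_le (A : Matrix (Fin d) (Fin d) ℂ) (v : Fin d → ℂ) :
    ‖eu (A.mulVec v)‖ ≤ opNorm A * ‖eu v‖ := by
  rw [← toEuclideanCLM_eu]
  exact (Matrix.toEuclideanCLM (𝕜 := ℂ) A).le_opNorm _

lemma cinner_smul_left (c : ℂ) (u v : Fin d → ℂ) :
    cinner (c • u) v = conj c * cinner u v := by
  simp [cinner, Finset.mul_sum, mul_assoc]

lemma cinner_smul_right (c : ℂ) (u v : Fin d → ℂ) :
    cinner u (c • v) = c * cinner u v := by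
  simp only [cinner, Pi.smul_apply, smul_eq_mul, Finset.mul_sum]
  exact Finset.sum_congr rfl fun i _ => by ring

lemma cinner_sum_right {ι : Type*} (s : Finset ι) (u : Fin d → ℂ) (f : ι → Fin d → ℂ) :
    cinner u (∑ i ∈ s, f i) = ∑ i ∈ s, cinner u (f i) := by
  simp [cinner, Finset.mul_sum]
  rw [Finset.sum_comm]

lemma cinner_sum_left {ι : Type*} (s : Finset ι) (f : ι → Fin d → ℂ) (u : Fin d → ℂ) :
    cinner (∑ i ∈ s, f i) u = ∑ i ∈ s, cinner (f i) u := by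
  simp [cinner, Finset.sum_mul]
  rw [Finset.sum_comm]

lemma cinner_self (v : Fin d → ℂ) : cinner v v = (‖eu v‖ : ℂ) ^ 2 := by
  rw [cinner_eq]; exact inner_self_eq_norm_sq_to_K _

lemma cinner_mulVec (A : Matrix (Fin d) (Fin d) ℂ) (u v : Fin d → ℂ) :
    cinner (A.mulVec u) v = cinner u (Matrix.mulVec A.conjTranspose v) := by
  simp only [cinner, Matrix.mulVec, dotProduct, Matrix.conjTranspose_apply,
    Finset.mul_sum, Finset.sum_mul, map_sum, map_mul]
  rw [Finset.sum_comm]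
  simp [mul_comm, mul_left_comm]

lemma ketbra_mulVec (u v w : Fin d → ℂ) :
    (ketbra u v).mulVec w = cinner v w • u := by
  funext i
  simp only [ketbra, Matrix.mulVec, dotProduct, Matrix.of_apply, cinner,
    Pi.smul_apply, smul_eq_mul, Finset.sum_mul]
  exact Finset.sum_congr rfl fun j _ => by ring

lemma trace_ketbra_mul (u v : Fin d → ℂ) (B : Matrix (Fin d) (Fin d) ℂ) :
    (ketbra u v * B).trace = cinner v (B.mulVec u) := by
  simp only [Matrix.trace, Matrix.diag, Matrix.mul_apply, ketbra, Matrix.of_apply,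
    cinner, Matrix.mulVec, dotProduct, Finset.mul_sum]
  rw [Finset.sum_comm]
  exact Finset.sum_congr rfl fun i _ => Finset.sum_congr rfl fun j _ => by ring

lemma ketbra_mul_ketbra (u v w z : Fin d → ℂ) :
    ketbra u v * ketbra w z = cinner v w • ketbra u z := by
  ext i j
  simp [ketbra, Matrix.mul_apply, cinner, Finset.sum_mul, Finset.mul_sum]
  ring_nf
  apply Finset.sum_congr rfl; intros; ring

lemma eu_inj (u v : Fin d → ℂ) (h : eu u = eu v) : u = v := by
  simpa [eu] using congrArg (WithLp.equiv 2 _) h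

lemma sum_ketbra_eq_one (b : OrthonormalBasis (Fin d) ℂ (EuclideanSpace ℂ (Fin d))) :
    ∑ i, ketbra (fun a => b i a) (fun a => b i a) = 1 := by
  ext a a'
  have h := b.sum_inner_mul_inner (EuclideanSpace.single a (1 : ℂ))
    (EuclideanSpace.single a' (1 : ℂ))
  simp only [EuclideanSpace.inner_single_left, EuclideanSpace.inner_single_right,
    EuclideanSpace.inner_single_left, map_one, one_mul, mul_one] at h
  simp only [Finset.sum_apply, Matrix.sum_apply, ketbra, Matrix.of_apply]
  rw [h]
  simp [EuclideanSpace.single_apply, Matrix.one_apply, eq_comm]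

lemma trace_eq_sum_cinner (b : OrthonormalBasis (Fin d) ℂ (EuclideanSpace ℂ (Fin d)))
    (M : Matrix (Fin d) (Fin d) ℂ) :
    M.trace = ∑ i, cinner (fun a => b i a) (M.mulVec (fun a => b i a)) := by
  conv_lhs => rw [← mul_one M, ← sum_ketbra_eq_one b]
  rw [Finset.mul_sum, Matrix.trace_sum]
  exact Finset.sum_congr rfl fun i _ => by
    rw [Matrix.trace_mul_comm, trace_ketbra_mul]

lemma cinner_sum_smul_sum_smul (φ : Fin d → Fin d → ℂ)
    (hφ : ∀ i j, cinner (φ i) (φ j) = if i = j then 1 else 0) (c : Fin d → ℂ) :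
    cinner (∑ i, c i • φ i) (∑ i, c i • φ i) = ∑ i, (‖c i‖ : ℂ) ^ 2 := by
  rw [cinner_sum_left]
  have : ∀ i, cinner (c i • φ i) (∑ j, c j • φ j) = (‖c i‖ : ℂ) ^ 2 := by
    intro i
    rw [cinner_smul_left, cinner_sum_right]
    have : ∀ j, cinner (φ i) (c j • φ j) = if i = j then c i else 0 := by
      intro j
      rw [cinner_smul_right, hφ]
      by_cases h : i = j <;> simp [h]
    rw [Finset.sum_congr rfl fun j _ => this j]
    simp only [Finset.sum_ite_eq, Finset.mem_univ, if_pos]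
    rw [mul_comm, Complex.mul_conj]
    norm_cast
    rw [Complex.sq_norm]
  exact Finset.sum_congr rfl fun i _ => this i

lemma norm_eu_sum_smul_sq (φ : Fin d → Fin d → ℂ)
    (hφ : ∀ i j, cinner (φ i) (φ j) = if i = j then 1 else 0) (c : Fin d → ℂ) :
    ‖eu (∑ i, c i • φ i)‖ ^ 2 = ∑ i, ‖c i‖ ^ 2 := by
  have h1 := cinner_self (∑ i, c i • φ i)
  rw [cinner_sum_smul_sum_smul φ hφ c] at h1
  have : ((∑ i, ‖c i‖ ^ 2 : ℝ) : ℂ) = ((‖eu (∑ i, c i • φ i)‖ ^ 2 : ℝ) : ℂ) := by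
    push_cast
    rw [← h1]
  exact_mod_cast this.symm

lemma bessel_sub (w : Fin d → Fin d → ℂ) (t : Fin d → ℝ)
    (hw : ∀ i j, cinner (w i) (w j) = if i = j then (t i : ℂ) else 0)
    (ht : ∀ i, t i = 0 ∨ t i = 1) (x : Fin d → ℂ) :
    ∑ i, ‖cinner (w i) x‖ ^ 2 ≤ ‖eu x‖ ^ 2 := by
  classical
  have hzero : ∀ i, t i = 0 → w i = 0 := by
    intro i hi
    have h := hw i i
    rw [if_pos rfl, hi] at h
    have h2 := cinner_self (w i)
    rw [h] at h2
    have : (‖eu (w i)‖ : ℂ) ^ 2 = 0 := by rw [← h2]; norm_num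
    have : ‖eu (w i)‖ = 0 := by
      have := sq_eq_zero_iff.mp (by exact_mod_cast this : (‖eu (w i)‖ : ℝ)^2 = 0)
      exact this
    have : eu (w i) = 0 := norm_eq_zero.mp this
    have := eu_inj (w i) 0 (by simpa [eu] using this)
    simpa using this
  set s : Finset (Fin d) := Finset.univ.filter (fun i => t i = 1) with hs
  have hsum : ∑ i, ‖cinner (w i) x‖ ^ 2
      = ∑ i ∈ s, ‖cinner (w i) x‖ ^ 2 := by
    symm
    apply Finset.sum_subset (Finset.subset_univ _)
    intro i _ hi
    have : t i = 0 := by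
      rcases ht i with h | h
      · exact h
      · exact absurd (by simp [hs, h] : i ∈ s) hi
    rw [hzero i this]
    simp [cinner]
  rw [hsum]
  have horth : Orthonormal ℂ (fun i : ↥s => eu (w i)) := by
    rw [orthonormal_iff_ite]
    intro i j
    simp only [← cinner_eq, hw]
    rcases i with ⟨i, hi⟩; rcases j with ⟨j, hj⟩
    have hti : t i = 1 := by simpa [hs] using hi
    by_cases h : i = j
    · subst h; simp [hti]
    · simp [h, Subtype.ext_iff]
  have hb := horth.sum_inner_products_le (𝕜 := ℂ) (eu x) (s := Finset.univ)
  calc ∑ i ∈ s, ‖cinner (w i) x‖ ^ 2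
      = ∑ i : ↥s, ‖@inner ℂ _ _ (eu (w i)) (eu x)‖ ^ 2 := by
        rw [← Finset.sum_coe_sort]
        exact Finset.sum_congr rfl fun i _ => by
          simp only [← cinner_eq]
    _ ≤ ‖eu x‖ ^ 2 := hb

lemma sum_mulVec' {ι : Type*} (s : Finset ι) (f : ι → Matrix (Fin d) (Fin d) ℂ)
    (v : Fin d → ℂ) : (∑ i ∈ s, f i).mulVec v = ∑ i ∈ s, (f i).mulVec v := by
  classical
  induction s using Finset.induction with
  | empty => simp [Matrix.mulVec]
  | insert _ _ h ih => rw [Finset.sum_insert h, Finset.sum_insert h, Matrix.add_mulVec, ih]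

lemma opNorm_le_of_mulVec (A : Matrix (Fin d) (Fin d) ℂ) (M : ℝ) (hM : 0 ≤ M)
    (h : ∀ v : Fin d → ℂ, ‖eu (A.mulVec v)‖ ≤ M * ‖eu v‖) : opNorm A ≤ M := by
  apply ContinuousLinearMap.opNorm_le_bound _ hM
  intro x
  have hx : x = eu (WithLp.equiv 2 _ x) := rfl
  rw [hx, toEuclideanCLM_eu]
  exact h _

lemma opNorm_sum_smul_ketbra_le (φ w : Fin d → Fin d → ℂ) (t : Fin d → ℝ) (a : Fin d → ℂ)
    (M : ℝ) (hM : 0 ≤ M)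
    (hφ : ∀ i j, cinner (φ i) (φ j) = if i = j then 1 else 0)
    (hw : ∀ i j, cinner (w i) (w j) = if i = j then (t i : ℂ) else 0)
    (ht : ∀ i, t i = 0 ∨ t i = 1)
    (ha : ∀ i, ‖a i‖ ≤ M) :
    opNorm (∑ i, a i • ketbra (φ i) (w i)) ≤ M := by
  apply opNorm_le_of_mulVec _ _ hM
  intro v
  have hmv : (∑ i, a i • ketbra (φ i) (w i)).mulVec v
      = ∑ i, (a i * cinner (w i) v) • φ i := by
    rw [sum_mulVec']
    exact Finset.sum_congr rfl fun i _ => by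
      rw [Matrix.smul_mulVec, ketbra_mulVec]
      rw [smul_smul]
  rw [hmv]
  have h1 : ‖eu (∑ i, (a i * cinner (w i) v) • φ i)‖ ^ 2
      = ∑ i, ‖a i * cinner (w i) v‖ ^ 2 := norm_eu_sum_smul_sq φ hφ _
  have h2 : ∑ i, ‖a i * cinner (w i) v‖ ^ 2 ≤ M ^ 2 * ‖eu v‖ ^ 2 := by
    calc ∑ i, ‖a i * cinner (w i) v‖ ^ 2
        ≤ ∑ i, M ^ 2 * ‖cinner (w i) v‖ ^ 2 := by
          apply Finset.sum_le_sum
          intro i _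
          rw [norm_mul, mul_pow]
          apply mul_le_mul_of_nonneg_right _ (by positivity)
          exact pow_le_pow_left₀ (norm_nonneg _) (ha i) 2
      _ = M ^ 2 * ∑ i, ‖cinner (w i) v‖ ^ 2 := by rw [Finset.mul_sum]
      _ ≤ M ^ 2 * ‖eu v‖ ^ 2 := by
          apply mul_le_mul_of_nonneg_left (bessel_sub w t hw ht v) (by positivity)
  have h3 : ‖eu (∑ i, (a i * cinner (w i) v) • φ i)‖ ^ 2 ≤ (M * ‖eu v‖) ^ 2 := by
    rw [h1, mul_pow]; exact h2
  exact (pow_le_pow_iff_left₀ (norm_nonneg _) (by positivity) (by norm_num)).mp h3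

lemma sqrtA_posSemidef (A : Matrix (Fin d) (Fin d) ℂ) : (A.conjTranspose * A).PosSemidef :=
  Matrix.posSemidef_conjTranspose_mul_self A

def sval (A : Matrix (Fin d) (Fin d) ℂ) : Fin d → ℝ :=
  fun i => √((sqrtA_posSemidef A).1.eigenvalues i)

def svec (A : Matrix (Fin d) (Fin d) ℂ) (i : Fin d) : Fin d → ℂ :=
  fun a => (sqrtA_posSemidef A).1.eigenvectorBasis i a

lemma sval_nonneg (A : Matrix (Fin d) (Fin d) ℂ) (i : Fin d) : 0 ≤ sval A i :=
  Real.sqrt_nonneg _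

lemma eu_svec (A : Matrix (Fin d) (Fin d) ℂ) (i : Fin d) :
    eu (svec A i) = (sqrtA_posSemidef A).1.eigenvectorBasis i := rfl

lemma svec_orthonormal (A : Matrix (Fin d) (Fin d) ℂ) (i j : Fin d) :
    cinner (svec A i) (svec A j) = if i = j then 1 else 0 := by
  rw [cinner_eq, eu_svec, eu_svec]
  exact orthonormal_iff_ite.mp (sqrtA_posSemidef A).1.eigenvectorBasis.orthonormal i j

lemma eig_mulVec (A : Matrix (Fin d) (Fin d) ℂ) (i : Fin d) :
    (A.conjTranspose * A).mulVec (svec A i) = (((sval A i) ^ 2 : ℝ) : ℂ) • svec A i := by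
  have h := (sqrtA_posSemidef A).1.mulVec_eigenvectorBasis i
  rw [sval, Real.sq_sqrt ((sqrtA_posSemidef A).eigenvalues_nonneg i)]
  funext a
  have := congrFun h a
  have h' : svec A i = ⇑((sqrtA_posSemidef A).1.eigenvectorBasis i) := rfl
  rw [h']
  simpa [Complex.real_smul] using this

lemma traceNorm_eq_sum_sval (A : Matrix (Fin d) (Fin d) ℂ) :
    traceNorm A = ∑ i, sval A i := by
  rw [traceNorm, Matrix.trace_mul_comm, ← mul_assoc, Unitary.coe_star_mul_self, one_mul,
    Matrix.trace_diagonal, Complex.re_sum]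
  simp only [Complex.ofReal_re]
  rfl

lemma cinner_mulVec_svec (A : Matrix (Fin d) (Fin d) ℂ) (i j : Fin d) :
    cinner (A.mulVec (svec A i)) (A.mulVec (svec A j)) =
      if i = j then ((sval A i : ℂ)) ^ 2 else 0 := by
  rw [cinner_mulVec, Matrix.mulVec_mulVec, eig_mulVec, cinner_smul_right, svec_orthonormal]
  by_cases h : i = j
  · subst h; simp
  · simp [h]

lemma norm_mulVec_svec (A : Matrix (Fin d) (Fin d) ℂ) (i : Fin d) :
    ‖eu (A.mulVec (svec A i))‖ = sval A i := by
  have h1 := cinner_self (A.mulVec (svec A i))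
  have h2 := cinner_mulVec_svec A i i
  rw [if_pos rfl] at h2
  rw [h2] at h1
  have h3 : ‖eu (A.mulVec (svec A i))‖ ^ 2 = (sval A i) ^ 2 := by
    have : (sval A i) ^ 2 = ‖eu (A.mulVec (svec A i))‖ ^ 2 := by exact_mod_cast h1
    exact this.symm
  exact (pow_left_inj₀ (norm_nonneg _) (sval_nonneg A i) two_ne_zero).mp h3

lemma norm_eu_svec (A : Matrix (Fin d) (Fin d) ℂ) (i : Fin d) : ‖eu (svec A i)‖ = 1 := by
  rw [eu_svec]
  exact (sqrtA_posSemidef A).1.eigenvectorBasis.orthonormal.1 i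

lemma opNorm_nonneg (A : Matrix (Fin d) (Fin d) ℂ) : 0 ≤ opNorm A := norm_nonneg _

lemma traceNorm_nonneg (A : Matrix (Fin d) (Fin d) ℂ) : 0 ≤ traceNorm A := by
  rw [traceNorm_eq_sum_sval]
  exact Finset.sum_nonneg fun i _ => sval_nonneg A i

/-- Key duality upper bound. -/
lemma abs_trace_mul_le (A B : Matrix (Fin d) (Fin d) ℂ) :
    ‖(B * A).trace‖ ≤ traceNorm A * opNorm B := by
  rw [trace_eq_sum_cinner ((sqrtA_posSemidef A).1.eigenvectorBasis)]
  have hfun : ∀ i : Fin d, (fun a => (sqrtA_posSemidef A).1.eigenvectorBasis i a) = svec A i :=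
    fun i => rfl
  calc ‖∑ i, cinner (fun a => (sqrtA_posSemidef A).1.eigenvectorBasis i a)
        ((B * A).mulVec fun a => (sqrtA_posSemidef A).1.eigenvectorBasis i a)‖
      ≤ ∑ i, ‖cinner (svec A i) ((B * A).mulVec (svec A i))‖ := by
        rw [show  (∑ i, cinner (fun a => (sqrtA_posSemidef A).1.eigenvectorBasis i a)
          ((B * A).mulVec fun a => (sqrtA_posSemidef A).1.eigenvectorBasis i a))
          = ∑ i, cinner (svec A i) ((B * A).mulVec (svec A i)) from
            Finset.sum_congr rfl fun i _ => by rw [hfun]]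
        exact norm_sum_le _ _
    _ ≤ ∑ i, sval A i * opNorm B := by
        apply Finset.sum_le_sum
        intro i _
        rw [← Matrix.mulVec_mulVec]
        calc ‖cinner (svec A i) (B.mulVec (A.mulVec (svec A i)))‖
            ≤ ‖eu (svec A i)‖ * ‖eu (B.mulVec (A.mulVec (svec A i)))‖ := by
              rw [cinner_eq]
              exact norm_inner_le_norm _ _
          _ = ‖eu (B.mulVec (A.mulVec (svec A i)))‖ := by rw [norm_eu_svec, one_mul]
          _ ≤ opNorm B * ‖eu (A.mulVec (svec A i))‖ := norm_mulVec_le B _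
          _ = opNorm B * sval A i := by rw [norm_mulVec_svec]
          _ = sval A i * opNorm B := mul_comm _ _
    _ = traceNorm A * opNorm B := by rw [← Finset.sum_mul, ← traceNorm_eq_sum_sval]

lemma abs_trace_mul_le' (A B : Matrix (Fin d) (Fin d) ℂ) :
    ‖(A * B).trace‖ ≤ traceNorm A * opNorm B := by
  rw [Matrix.trace_mul_comm]
  exact abs_trace_mul_le A B

/-- Duality attainment. -/
lemma exists_dual (A : Matrix (Fin d) (Fin d) ℂ) :
    ∃ U : Matrix (Fin d) (Fin d) ℂ, opNorm U ≤ 1 ∧ (A * U).trace = (traceNorm A : ℂ) := by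
  classical
  set w : Fin d → Fin d → ℂ := fun i =>
    if sval A i = 0 then 0 else ((sval A i : ℂ))⁻¹ • A.mulVec (svec A i) with hwdef
  set t : Fin d → ℝ := fun i => if sval A i = 0 then 0 else 1 with htdef
  have hw : ∀ i j, cinner (w i) (w j) = if i = j then (t i : ℂ) else 0 := by
    intro i j
    by_cases hi : sval A i = 0 <;> by_cases hj : sval A j = 0
    · simp [hwdef, htdef, hi, hj, cinner]
    · have hij : i ≠ j := fun h => hj (h ▸ hi)
      simp [hwdef, htdef, hi, hj, hij, cinner]
    · have hij : i ≠ j := fun h => hi (h ▸ hj)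
      simp [hwdef, htdef, hi, hj, hij, cinner]
    · rw [hwdef]
      simp only [hi, hj, if_neg, ite_false]
      rw [cinner_smul_left, cinner_smul_right, cinner_mulVec_svec]
      by_cases h : i = j
      · subst h
        rw [if_pos rfl, map_inv₀, Complex.conj_ofReal]
        have hne : ((sval A i : ℂ)) ≠ 0 := by exact_mod_cast hi
        rw [htdef]
        simp only [hi, ite_false]
        field_simp
        simp
      · simp [htdef, h]
  have ht : ∀ i, t i = 0 ∨ t i = 1 := by
    intro i; by_cases h : sval A i = 0 <;> simp [htdef, h]
  refine ⟨∑ i, (1 : ℂ) • ketbra (svec A i) (w i), ?_, ?_⟩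
  · exact opNorm_sum_smul_ketbra_le (svec A) w t (fun _ => 1) 1 zero_le_one
      (svec_orthonormal A) hw ht (by simp)
  · rw [Matrix.trace_mul_comm]
    rw [trace_eq_sum_cinner ((sqrtA_posSemidef A).1.eigenvectorBasis)]
    have step : ∀ j, cinner (svec A j)
        (((∑ i, (1 : ℂ) • ketbra (svec A i) (w i)) * A).mulVec (svec A j))
        = (sval A j : ℂ) := by
      intro j
      rw [← Matrix.mulVec_mulVec, sum_mulVec']
      have : ∀ i, ((1 : ℂ) • ketbra (svec A i) (w i)).mulVec (A.mulVec (svec A j))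
          = (cinner (w i) (A.mulVec (svec A j))) • svec A i := by
        intro i
        rw [one_smul, ketbra_mulVec]
      rw [Finset.sum_congr rfl fun i _ => this i, cinner_sum_right]
      have : ∀ i, cinner (svec A j) ((cinner (w i) (A.mulVec (svec A j))) • svec A i)
          = if j = i then cinner (w i) (A.mulVec (svec A j)) else 0 := by
        intro i
        rw [cinner_smul_right, svec_orthonormal]
        by_cases h : j = i <;> simp [h]
      rw [Finset.sum_congr rfl fun i _ => this i]
      simp only [Finset.sum_ite_eq, Finset.mem_univ, if_pos]
      by_cases hj : sval A j = 0
      · simp [hwdef, hj, cinner, hj]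
      · rw [hwdef]
        simp only [hj, ite_false]
        rw [cinner_smul_left, cinner_mulVec_svec, if_pos rfl]
        rw [map_inv₀, Complex.conj_ofReal]
        field_simp
    have hsum : ∑ i, cinner (fun a => (sqrtA_posSemidef A).1.eigenvectorBasis i a)
        (((∑ i, (1 : ℂ) • ketbra (svec A i) (w i)) * A).mulVec
          fun a => (sqrtA_posSemidef A).1.eigenvectorBasis i a) = ∑ j, ((sval A j : ℝ) : ℂ) :=
      Finset.sum_congr rfl fun j _ => step j
    rw [hsum]
    norm_cast
    rw [traceNorm_eq_sum_sval]

lemma opNorm_one_le : opNorm (1 : Matrix (Fin d) (Fin d) ℂ) ≤ 1 := by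
  rw [opNorm, map_one]
  exact ContinuousLinearMap.norm_id_le

lemma opNorm_mul_le (A B : Matrix (Fin d) (Fin d) ℂ) :
    opNorm (A * B) ≤ opNorm A * opNorm B := by
  rw [opNorm, map_mul]
  exact norm_mul_le _ _

lemma abs_trace_le (A : Matrix (Fin d) (Fin d) ℂ) :
    ‖A.trace‖ ≤ traceNorm A := by
  have h := abs_trace_mul_le' A 1
  rw [mul_one] at h
  calc ‖A.trace‖ ≤ traceNorm A * opNorm 1 := h
    _ ≤ traceNorm A * 1 := mul_le_mul_of_nonneg_left opNorm_one_le (traceNorm_nonneg A)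
    _ = traceNorm A := mul_one _

lemma traceNorm_triangle (A B : Matrix (Fin d) (Fin d) ℂ) :
    traceNorm (A + B) ≤ traceNorm A + traceNorm B := by
  obtain ⟨U, hU, htr⟩ := exists_dual (A + B)
  have h1 : (traceNorm (A + B) : ℝ) = ‖((A + B) * U).trace‖ := by
    rw [htr, Complex.norm_real, Real.norm_eq_abs, _root_.abs_of_nonneg (traceNorm_nonneg _)]
  rw [h1, add_mul, Matrix.trace_add]
  calc ‖(A * U).trace + (B * U).trace‖
      ≤ ‖(A * U).trace‖ + ‖(B * U).trace‖ := norm_add_le _ _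
    _ ≤ traceNorm A * opNorm U + traceNorm B * opNorm U :=
        add_le_add (abs_trace_mul_le' A U) (abs_trace_mul_le' B U)
    _ ≤ traceNorm A * 1 + traceNorm B * 1 :=
        add_le_add (mul_le_mul_of_nonneg_left hU (traceNorm_nonneg A))
          (mul_le_mul_of_nonneg_left hU (traceNorm_nonneg B))
    _ = traceNorm A + traceNorm B := by ring

lemma traceNorm_mul_le_right (A B : Matrix (Fin d) (Fin d) ℂ) :
    traceNorm (A * B) ≤ traceNorm A * opNorm B := by
  obtain ⟨U, hU, htr⟩ := exists_dual (A * B)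
  have h1 : (traceNorm (A * B) : ℝ) = ‖(A * B * U).trace‖ := by
    rw [htr, Complex.norm_real, Real.norm_eq_abs, _root_.abs_of_nonneg (traceNorm_nonneg _)]
  rw [h1, mul_assoc]
  calc ‖(A * (B * U)).trace‖
      ≤ traceNorm A * opNorm (B * U) := abs_trace_mul_le' A (B * U)
    _ ≤ traceNorm A * (opNorm B * opNorm U) :=
        mul_le_mul_of_nonneg_left (opNorm_mul_le B U) (traceNorm_nonneg A)
    _ ≤ traceNorm A * (opNorm B * 1) := by
        apply mul_le_mul_of_nonneg_left _ (traceNorm_nonneg A)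
        exact mul_le_mul_of_nonneg_left hU (opNorm_nonneg B)
    _ = traceNorm A * opNorm B := by ring

lemma traceNorm_mul_le_left (A B : Matrix (Fin d) (Fin d) ℂ) :
    traceNorm (A * B) ≤ opNorm A * traceNorm B := by
  obtain ⟨U, hU, htr⟩ := exists_dual (A * B)
  have h1 : (traceNorm (A * B) : ℝ) = ‖(A * B * U).trace‖ := by
    rw [htr, Complex.norm_real, Real.norm_eq_abs, _root_.abs_of_nonneg (traceNorm_nonneg _)]
  rw [h1]
  have h2 : (A * B * U).trace = (B * (U * A)).trace := by
    rw [Matrix.trace_mul_comm, ← mul_assoc, Matrix.trace_mul_comm (U * A) B]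
  rw [h2]
  calc ‖(B * (U * A)).trace‖
      ≤ traceNorm B * opNorm (U * A) := abs_trace_mul_le' B (U * A)
    _ ≤ traceNorm B * (opNorm U * opNorm A) :=
        mul_le_mul_of_nonneg_left (opNorm_mul_le U A) (traceNorm_nonneg B)
    _ ≤ traceNorm B * (1 * opNorm A) := by
        apply mul_le_mul_of_nonneg_left _ (traceNorm_nonneg B)
        exact mul_le_mul_of_nonneg_right hU (opNorm_nonneg A)
    _ = opNorm A * traceNorm B := by ring

lemma opNorm_le_traceNorm (A : Matrix (Fin d) (Fin d) ℂ) : opNorm A ≤ traceNorm A := by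
  apply opNorm_le_of_mulVec _ _ (traceNorm_nonneg A)
  intro v
  by_cases hv : eu (A.mulVec v) = 0
  · rw [hv, norm_zero]
    exact mul_nonneg (traceNorm_nonneg A) (norm_nonneg _)
  · set y : Fin d → ℂ := (‖eu (A.mulVec v)‖ : ℂ)⁻¹ • A.mulVec v with hy
    have hnorm : ‖eu (A.mulVec v)‖ ≠ 0 := norm_ne_zero_iff.mpr hv
    have hcy : cinner y (A.mulVec v) = (‖eu (A.mulVec v)‖ : ℂ) := by
      rw [hy, cinner_smul_left, map_inv₀, Complex.conj_ofReal, cinner_self]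
      have : ((‖eu (A.mulVec v)‖ : ℝ) : ℂ) ≠ 0 := by exact_mod_cast hnorm
      field_simp
    have hket : ‖(A * ketbra v y).trace‖ ≤ traceNorm A * opNorm (ketbra v y) :=
      abs_trace_mul_le' A _
    have htrace : (A * ketbra v y).trace = (‖eu (A.mulVec v)‖ : ℂ) := by
      rw [Matrix.trace_mul_comm, trace_ketbra_mul, hcy]
    have hopket : opNorm (ketbra v y) ≤ ‖eu v‖ := by
      apply opNorm_le_of_mulVec _ _ (norm_nonneg _)
      intro u
      rw [ketbra_mulVec]
      have : ‖eu (cinner y u • v)‖ = ‖cinner y u‖ * ‖eu v‖ := by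
        rw [show eu (cinner y u • v) = cinner y u • eu v from rfl, norm_smul]
      rw [this]
      have hyn : ‖eu y‖ ≤ 1 := by
        rw [hy, show eu ((‖eu (A.mulVec v)‖ : ℂ)⁻¹ • A.mulVec v)
          = (‖eu (A.mulVec v)‖ : ℂ)⁻¹ • eu (A.mulVec v) from rfl, norm_smul]
        simp [hnorm]
      calc ‖cinner y u‖ * ‖eu v‖
          ≤ (‖eu y‖ * ‖eu u‖) * ‖eu v‖ := by
            apply mul_le_mul_of_nonneg_right _ (norm_nonneg _)
            rw [cinner_eq]
            exact norm_inner_le_norm _ _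
        _ ≤ (1 * ‖eu u‖) * ‖eu v‖ := by
            apply mul_le_mul_of_nonneg_right _ (norm_nonneg _)
            exact mul_le_mul_of_nonneg_right hyn (norm_nonneg _)
        _ = ‖eu v‖ * ‖eu u‖ := by ring
    have := hket
    rw [htrace] at this
    rw [Complex.norm_real, Real.norm_eq_abs, _root_.abs_of_nonneg (norm_nonneg _)] at this
    calc ‖eu (A.mulVec v)‖ ≤ traceNorm A * opNorm (ketbra v y) := this
      _ ≤ traceNorm A * ‖eu v‖ :=
          mul_le_mul_of_nonneg_left hopket (traceNorm_nonneg A)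

lemma trace_ketbra (u v : Fin d → ℂ) : (ketbra u v).trace = cinner v u := by
  have := trace_ketbra_mul u v 1
  rwa [mul_one, Matrix.one_mulVec] at this

lemma norm_eu_eq_one {v : Fin d → ℂ} (h : cinner v v = 1) : ‖eu v‖ = 1 := by
  have h1 := cinner_self v
  rw [h] at h1
  have h2 : ‖eu v‖ ^ 2 = 1 ^ 2 := by
    have : ((1:ℝ) : ℂ) ^ 2 = ((‖eu v‖ : ℝ) : ℂ) ^ 2 := by push_cast; rw [← h1]; norm_num
    have := this.symm
    exact_mod_cast this
  exact (pow_left_inj₀ (norm_nonneg _) zero_le_one two_ne_zero).mp h2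

lemma abs_cinner_mulVec_le (O : Matrix (Fin d) (Fin d) ℂ) {v : Fin d → ℂ}
    (h : cinner v v = 1) : ‖cinner v (O.mulVec v)‖ ≤ opNorm O := by
  calc ‖cinner v (O.mulVec v)‖
      ≤ ‖eu v‖ * ‖eu (O.mulVec v)‖ := by
        rw [cinner_eq]
        exact norm_inner_le_norm _ _
    _ ≤ ‖eu v‖ * (opNorm O * ‖eu v‖) :=
        mul_le_mul_of_nonneg_left (norm_mulVec_le O v) (norm_nonneg _)
    _ = opNorm O := by rw [norm_eu_eq_one h]; ring

section Rho
variable {ψ : Fin d → Fin d → ℂ}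
  (horth : ∀ j k, cinner (ψ j) (ψ k) = if j = k then 1 else 0)

include horth

lemma sum_ketbra_mul_sum_ketbra (a b : Fin d → ℂ) :
    (∑ k, a k • ketbra (ψ k) (ψ k)) * (∑ k, b k • ketbra (ψ k) (ψ k))
      = ∑ k, (a k * b k) • ketbra (ψ k) (ψ k) := by
  rw [Finset.sum_mul_sum]
  have h : ∀ i j : Fin d, (a i • ketbra (ψ i) (ψ i)) * (b j • ketbra (ψ j) (ψ j))
      = if i = j then (a i * b j) • ketbra (ψ i) (ψ j) else 0 := by
    intro i j
    rw [Matrix.smul_mul, Matrix.mul_smul, ketbra_mul_ketbra, horth]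
    by_cases h : i = j <;> simp [h, smul_smul]
  calc ∑ i, ∑ j, (a i • ketbra (ψ i) (ψ i)) * (b j • ketbra (ψ j) (ψ j))
      = ∑ i, ∑ j, if i = j then (a i * b j) • ketbra (ψ i) (ψ j) else 0 :=
        Finset.sum_congr rfl fun i _ => Finset.sum_congr rfl fun j _ => h i j
    _ = ∑ k, (a k * b k) • ketbra (ψ k) (ψ k) := by simp

lemma rho_pow_eq (a : Fin d → ℂ) (n : ℕ) (hn : 1 ≤ n) :
    (∑ k, a k • ketbra (ψ k) (ψ k)) ^ n = ∑ k, (a k ^ n) • ketbra (ψ k) (ψ k) := by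
  induction n with
  | zero => omega
  | succ m ih =>
    by_cases hm : 1 ≤ m
    · rw [pow_succ, ih hm, sum_ketbra_mul_sum_ketbra horth]
      exact Finset.sum_congr rfl fun k _ => by rw [← pow_succ]
    · have : m = 0 := by omega
      subst this
      simp

lemma trace_rho_pow (a : Fin d → ℂ) (n : ℕ) (hn : 1 ≤ n) :
    ((∑ k, a k • ketbra (ψ k) (ψ k)) ^ n).trace = ∑ k, a k ^ n := by
  rw [rho_pow_eq horth a n hn, Matrix.trace_sum]
  refine Finset.sum_congr rfl fun k _ => ?_
  rw [Matrix.trace_smul, trace_ketbra, horth, if_pos rfl, smul_eq_mul, mul_one]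

lemma trace_rho_pow_mul (a : Fin d → ℂ) (O : Matrix (Fin d) (Fin d) ℂ) (n : ℕ) (hn : 1 ≤ n) :
    (((∑ k, a k • ketbra (ψ k) (ψ k)) ^ n) * O).trace
      = ∑ k, a k ^ n * cinner (ψ k) (O.mulVec (ψ k)) := by
  rw [rho_pow_eq horth a n hn, Finset.sum_mul, Matrix.trace_sum]
  refine Finset.sum_congr rfl fun k _ => ?_
  rw [Matrix.smul_mul, Matrix.trace_smul, trace_ketbra_mul, smul_eq_mul]

lemma opNorm_rho_le (p : Fin d → ℝ) (hp : ∀ k, 0 ≤ p k) (M : ℝ) (hM0 : 0 ≤ M)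
    (hM : ∀ k, p k ≤ M) :
    opNorm (∑ k, (p k : ℂ) • ketbra (ψ k) (ψ k)) ≤ M := by
  apply opNorm_sum_smul_ketbra_le ψ ψ (fun _ => 1) (fun k => (p k : ℂ)) M hM0 horth
  · intro i j
    rw [horth]
    by_cases h : i = j <;> simp [h]
  · intro i; right; rfl
  · intro i
    rw [Complex.norm_real, Real.norm_eq_abs, _root_.abs_of_nonneg (hp i)]
    exact hM i

end Rho

lemma opNorm_add_le (A B : Matrix (Fin d) (Fin d) ℂ) :
    opNorm (A + B) ≤ opNorm A + opNorm B := by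
  rw [opNorm, map_add]
  exact norm_add_le _ _

lemma opNorm_pow_le (A : Matrix (Fin d) (Fin d) ℂ) {a : ℝ} (ha : opNorm A ≤ a) (n : ℕ) :
    opNorm (A ^ n) ≤ a ^ n := by
  induction n with
  | zero => simpa using opNorm_one_le
  | succ m ih =>
    rw [pow_succ, pow_succ]
    calc opNorm (A ^ m * A) ≤ opNorm (A ^ m) * opNorm A := opNorm_mul_le _ _
      _ ≤ a ^ m * a := mul_le_mul ih ha (opNorm_nonneg A)
          (le_trans (opNorm_nonneg _) ih)

lemma traceNorm_pow_sub_pow (R D : Matrix (Fin d) (Fin d) ℂ) (a e : ℝ)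
    (hR : opNorm R ≤ a) (hD : traceNorm D ≤ e) (n : ℕ) :
    traceNorm ((R + D) ^ n - R ^ n) ≤ (a + e) ^ n - a ^ n := by
  have ha0 : 0 ≤ a := le_trans (opNorm_nonneg R) hR
  have he0 : 0 ≤ e := le_trans (traceNorm_nonneg D) hD
  have hRD : opNorm (R + D) ≤ a + e :=
    le_trans (opNorm_add_le R D) (add_le_add hR (le_trans (opNorm_le_traceNorm D) hD))
  induction n with
  | zero =>
    simp only [pow_zero, sub_self]
    have hop0 : opNorm (0 : Matrix (Fin d) (Fin d) ℂ) = 0 := by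
      rw [opNorm, map_zero, norm_zero]
    have h := traceNorm_mul_le_right (0 : Matrix (Fin d) (Fin d) ℂ) 0
    rw [mul_zero, hop0, mul_zero] at h
    have : traceNorm (0 : Matrix (Fin d) (Fin d) ℂ) = 0 := le_antisymm h (traceNorm_nonneg _)
    rw [this]
  | succ m ih =>
    have key : (R + D) ^ (m + 1) - R ^ (m + 1)
        = ((R + D) ^ m - R ^ m) * (R + D) + R ^ m * D := by
      rw [pow_succ, pow_succ, sub_mul, mul_add, mul_add]
      abel
    rw [key]
    calc traceNorm (((R + D) ^ m - R ^ m) * (R + D) + R ^ m * D)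
        ≤ traceNorm (((R + D) ^ m - R ^ m) * (R + D)) + traceNorm (R ^ m * D) :=
          traceNorm_triangle _ _
      _ ≤ traceNorm ((R + D) ^ m - R ^ m) * opNorm (R + D)
            + opNorm (R ^ m) * traceNorm D :=
          add_le_add (traceNorm_mul_le_right _ _) (traceNorm_mul_le_left _ _)
      _ ≤ ((a + e) ^ m - a ^ m) * (a + e) + a ^ m * e := by
          apply add_le_add
          · apply mul_le_mul ih hRD (opNorm_nonneg _)
            have : a ^ m ≤ (a + e) ^ m := pow_le_pow_left₀ ha0 (by linarith) m
            linarith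
          · exact mul_le_mul (opNorm_pow_le R hR m) hD (traceNorm_nonneg D)
              (pow_nonneg ha0 m)
      _ = (a + e) ^ (m + 1) - a ^ (m + 1) := by ring

/-- Theorem 1, explicit form: with `ε = ‖ρ̄ − ρ‖₁` and `(p_q + ε)ⁿ < 2 p_qⁿ`,
`tr(ρ̄ⁿ) > 0` and the distilled estimate deviates from `⟨ψ_q, O ψ_q⟩` by at most
`2‖O‖_∞(Σ_{k≠q}p_kⁿ)/p_qⁿ + 4‖O‖_∞((p_q+ε)ⁿ−p_qⁿ)/(2p_qⁿ−(p_q+ε)ⁿ)`. -/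
theorem distillation_error_bound
    {d : ℕ} (hd : 0 < d)
    (H : Matrix (Fin d) (Fin d) ℂ) (hH : H.IsHermitian)
    (ψ : Fin d → Fin d → ℂ) (E : Fin d → ℝ)
    (horth : ∀ j k, cinner (ψ j) (ψ k) = if j = k then 1 else 0)
    (heig : ∀ k, H.mulVec (ψ k) = (E k : ℂ) • ψ k)
    (c : Fin d → ℂ) (ψ0 : Fin d → ℂ) (hψ0 : ψ0 = ∑ k, c k • ψ k)
    (hunit : cinner ψ0 ψ0 = 1)
    (p : Fin d → ℝ) (hp : ∀ k, p k = ‖c k‖ ^ 2)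
    (ρ : Matrix (Fin d) (Fin d) ℂ) (hρ : ρ = ∑ k, (p k : ℂ) • ketbra (ψ k) (ψ k))
    (σ : ℝ) (hσ : 0 < σ)
    (q : Fin d) (hq : ∀ k, p k ≤ p q)
    (n : ℕ) (hn : 1 ≤ n)
    (O : Matrix (Fin d) (Fin d) ℂ) (hO : O.IsHermitian)
    (ε : ℝ) (hε : ε = traceNorm (rhoBar H ψ0 σ - ρ))
    (hsmall : (p q + ε) ^ n < 2 * p q ^ n) :
    0 < ((rhoBar H ψ0 σ ^ n).trace).re ∧
    ‖(rhoBar H ψ0 σ ^ n * O).trace / (rhoBar H ψ0 σ ^ n).trace -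
        cinner (ψ q) (O.mulVec (ψ q))‖ ≤
      2 * opNorm O * ((∑ k ∈ Finset.univ.erase q, p k ^ n) / p q ^ n) +
        4 * opNorm O * (((p q + ε) ^ n - p q ^ n) / (2 * p q ^ n - (p q + ε) ^ n)) := by
  classical
  have hp0 : ∀ k, 0 ≤ p k := fun k => by rw [hp k]; positivity
  set Mbar : Matrix (Fin d) (Fin d) ℂ := rhoBar H ψ0 σ with hMbar

  have hpq0 : 0 ≤ p q := hp0 q
  have hε0 : 0 ≤ ε := hε ▸ traceNorm_nonneg _
  have hple : p q ^ n ≤ (p q + ε) ^ n := pow_le_pow_left₀ hpq0 (by linarith) n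
  have hpqn_pos : 0 < p q ^ n := by nlinarith
  set εn : ℝ := (p q + ε) ^ n - p q ^ n with hεn_def
  have hεn0 : 0 ≤ εn := by simp [hεn_def]; linarith
  set δ : ℝ := 2 * p q ^ n - (p q + ε) ^ n with hδ_def
  have hδ_pos : 0 < δ := by simp [hδ_def]; linarith
  -- perturbation bound
  have h_opρ : opNorm ρ ≤ p q := by
    rw [hρ]; exact opNorm_rho_le horth p hp0 (p q) hpq0 hq
  have hpert : traceNorm (Mbar ^ n - ρ ^ n) ≤ εn := by
    have h := traceNorm_pow_sub_pow ρ (Mbar - ρ) (p q) ε h_opρ (le_of_eq hε.symm) n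
    rwa [add_sub_cancel] at h
  -- traces of ρ powers
  set m : Fin d → ℂ := fun k => cinner (ψ k) (O.mulVec (ψ k)) with hm_def
  set B : ℝ := ∑ k, p k ^ n with hB_def
  set A : ℂ := ∑ k, ((p k : ℂ)) ^ n * m k with hA_def
  have hB : (ρ ^ n).trace = (B : ℂ) := by
    rw [hρ, trace_rho_pow horth _ n hn, hB_def]
    push_cast
    rfl
  have hA : (ρ ^ n * O).trace = A := by
    rw [hρ, trace_rho_pow_mul horth _ O n hn, hA_def]
  set B' : ℂ := (Mbar ^ n).trace with hB'_def
  set A' : ℂ := (Mbar ^ n * O).trace with hA'_def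
  have hBB' : ‖B' - (B : ℂ)‖ ≤ εn := by
    have : B' - (B : ℂ) = (Mbar ^ n - ρ ^ n).trace := by
      rw [Matrix.trace_sub, hB'_def, hB]
    rw [this]
    exact le_trans (abs_trace_le _) hpert
  have hAA' : ‖A' - A‖ ≤ εn * opNorm O := by
    have : A' - A = ((Mbar ^ n - ρ ^ n) * O).trace := by
      rw [Matrix.sub_mul, Matrix.trace_sub, hA'_def, hA]
    rw [this]
    exact le_trans (abs_trace_mul_le' _ O)
      (mul_le_mul_of_nonneg_right hpert (opNorm_nonneg O))
  have hBlow : p q ^ n ≤ B := by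
    rw [hB_def]
    exact Finset.single_le_sum (fun k _ => pow_nonneg (hp0 k) n) (Finset.mem_univ q)
  have hB_pos : 0 < B := lt_of_lt_of_le hpqn_pos hBlow
  -- part 1
  have hre : δ ≤ B'.re := by
    have h1 : |(B' - (B : ℂ)).re| ≤ ‖B' - (B : ℂ)‖ := Complex.abs_re_le_norm _
    have h2 : (B' - (B : ℂ)).re = B'.re - B := by simp [Complex.sub_re]
    rw [h2] at h1
    have := abs_le.mp h1
    simp only [hδ_def, hεn_def] at *
    linarith [this.1]
  have hB'_abs : δ ≤ ‖B'‖ := le_trans hre (Complex.re_le_norm B')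
  have hB'_ne : B' ≠ 0 := by
    intro h
    rw [h] at hB'_abs
    simp at hB'_abs
    linarith
  constructor
  · exact lt_of_lt_of_le hδ_pos hre
  -- part 2
  have hm_le : ∀ k, ‖m k‖ ≤ opNorm O := by
    intro k
    apply abs_cinner_mulVec_le O
    rw [horth, if_pos rfl]
  set S : ℝ := ∑ k ∈ Finset.univ.erase q, p k ^ n with hS_def
  have hS0 : 0 ≤ S :=
    Finset.sum_nonneg fun k _ => pow_nonneg (hp0 k) n
  have hA_le : ‖A‖ ≤ opNorm O * B := by
    calc ‖A‖ ≤ ∑ k, ‖((p k : ℂ)) ^ n * m k‖ := norm_sum_le _ _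
      _ ≤ ∑ k, p k ^ n * opNorm O := by
          apply Finset.sum_le_sum
          intro k _
          rw [norm_mul]
          have h1 : ‖(p k : ℂ) ^ n‖ = p k ^ n := by
            rw [norm_pow, Complex.norm_real, Real.norm_eq_abs, _root_.abs_of_nonneg (hp0 k)]
          rw [h1]
          exact mul_le_mul_of_nonneg_left (hm_le k) (pow_nonneg (hp0 k) n)
      _ = opNorm O * B := by rw [← Finset.sum_mul, hB_def]; ring
  have hO0 : 0 ≤ opNorm O := opNorm_nonneg O
  -- |A/B - m q| ≤ 2 ‖O‖ S / pq^n
  have hstep1 : ‖A / (B : ℂ) - m q‖ ≤ 2 * opNorm O * (S / p q ^ n) := by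
    have hnum : A - (B : ℂ) * m q = ∑ k ∈ Finset.univ.erase q, ((p k : ℂ)) ^ n * (m k - m q) := by
      rw [hA_def, hB_def]
      push_cast
      rw [Finset.sum_mul, ← Finset.sum_sub_distrib]
      have hterm : ∀ k : Fin d, (p k : ℂ) ^ n * m k - (p k : ℂ) ^ n * m q
          = (p k : ℂ) ^ n * (m k - m q) := fun k => by ring
      rw [Finset.sum_congr rfl fun k _ => hterm k]
      exact (Finset.sum_erase _ (by rw [sub_self, mul_zero])).symm
    have hnum_le : ‖A - (B : ℂ) * m q‖ ≤ 2 * opNorm O * S := by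
      rw [hnum]
      calc ‖∑ k ∈ Finset.univ.erase q, ((p k : ℂ)) ^ n * (m k - m q)‖
          ≤ ∑ k ∈ Finset.univ.erase q, ‖((p k : ℂ)) ^ n * (m k - m q)‖ :=
            norm_sum_le _ _
        _ ≤ ∑ k ∈ Finset.univ.erase q, p k ^ n * (2 * opNorm O) := by
            apply Finset.sum_le_sum
            intro k _
            rw [norm_mul, norm_pow, Complex.norm_real, Real.norm_eq_abs, _root_.abs_of_nonneg (hp0 k)]
            apply mul_le_mul_of_nonneg_left _ (pow_nonneg (hp0 k) n)
            have habs : ‖m k - m q‖ ≤ ‖m k‖ + ‖m q‖ := by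
              have h := norm_sub_le_norm_sub_add_norm_sub (m k) 0 (m q)
              simpa using h
            linarith [hm_le k, hm_le q]
        _ = 2 * opNorm O * S := by rw [← Finset.sum_mul, hS_def]; ring
    have hBne : ((B : ℝ) : ℂ) ≠ 0 := by
      simp only [ne_eq, Complex.ofReal_eq_zero]
      linarith
    have : A / (B : ℂ) - m q = (A - (B : ℂ) * m q) / (B : ℂ) := by
      field_simp
    rw [this, norm_div, Complex.norm_real, Real.norm_eq_abs, _root_.abs_of_nonneg hB_pos.le]
    calc ‖A - (B : ℂ) * m q‖ / B ≤ (2 * opNorm O * S) / p q ^ n :=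
          div_le_div₀ (by positivity) hnum_le hpqn_pos hBlow
      _ = 2 * opNorm O * (S / p q ^ n) := by ring
  -- |A'/B' - A/B| ≤ 2 ‖O‖ εn / δ
  have hstep2 : ‖A' / B' - A / (B : ℂ)‖ ≤ 2 * opNorm O * (εn / δ) := by
    have hBne : ((B : ℝ) : ℂ) ≠ 0 := by
      simp only [ne_eq, Complex.ofReal_eq_zero]; linarith
    have hsplit : A' / B' - A / (B : ℂ)
        = (A' - A) / B' + A * ((B : ℂ) - B') / ((B : ℂ) * B') := by
      field_simp
      ring
    rw [hsplit]
    have h1 : ‖(A' - A) / B'‖ ≤ (εn * opNorm O) / δ := by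
      rw [norm_div]
      apply div_le_div₀ (by positivity) hAA' hδ_pos hB'_abs
    have h2 : ‖A * ((B : ℂ) - B') / ((B : ℂ) * B')‖ ≤ opNorm O * εn / δ := by
      rw [norm_div, norm_mul, norm_mul, Complex.norm_real, Real.norm_eq_abs, _root_.abs_of_nonneg hB_pos.le]
      have hnum : ‖A‖ * ‖(B : ℂ) - B'‖ ≤ (opNorm O * B) * εn := by
        apply mul_le_mul hA_le _ (norm_nonneg _) (by positivity)
        rw [← norm_neg, neg_sub]
        exact hBB'
      have hden : B * δ ≤ B * ‖B'‖ :=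
        mul_le_mul_of_nonneg_left hB'_abs hB_pos.le
      calc ‖A‖ * ‖(B : ℂ) - B'‖ / (B * ‖B'‖)
          ≤ ((opNorm O * B) * εn) / (B * δ) :=
            div_le_div₀ (by positivity) hnum (by positivity) hden
        _ = opNorm O * εn / δ := by
            field_simp
    calc ‖(A' - A) / B' + A * ((B : ℂ) - B') / ((B : ℂ) * B')‖
        ≤ ‖(A' - A) / B'‖ + ‖A * ((B : ℂ) - B') / ((B : ℂ) * B')‖ :=
          norm_add_le _ _
      _ ≤ (εn * opNorm O) / δ + opNorm O * εn / δ := add_le_add h1 h2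
      _ = 2 * opNorm O * (εn / δ) := by ring
  calc ‖A' / B' - m q‖
      ≤ ‖A' / B' - A / (B : ℂ)‖ + ‖A / (B : ℂ) - m q‖ := by
        have : A' / B' - m q = (A' / B' - A / (B : ℂ)) + (A / (B : ℂ) - m q) := by ring
        rw [this]
        exact norm_add_le _ _
    _ ≤ 2 * opNorm O * (εn / δ) + 2 * opNorm O * (S / p q ^ n) := add_le_add hstep2 hstep1
    _ ≤ 2 * opNorm O * (S / p q ^ n) + 4 * opNorm O * (εn / δ) := by
        have h4 : 2 * opNorm O * (εn / δ) ≤ 4 * opNorm O * (εn / δ) := by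
          apply mul_le_mul_of_nonneg_right _ (by positivity)
          linarith
        linarith


end
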